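/- Let S, X be fixed discrete finite random variables with I(S;X) > 0 and let G_I(t) = inf{I(S;Y) : S → X → Y, I(X;Y) ≥ t}. Then for every 0 < λ ≤ 1 and 0 < t ≤ H(X), G_I(λt)/（λt) ≤ G_I(t)/t; i.e., t ↦ G_I(t)/t is non-decreasing on (0, H(X)]. -/

import Mathlib

open Finset Real

/-- The privacy funnel function `G_I(t)`: the infimum of `I(S;Y)` over all
channels `p_{Y|X}` with finite output alphabet such that `S → X → Y` and
`I(X;Y) ≥ t`, for the joint distribution given by `p_X = pX` and
`p_{S|X} = c`.  Mutual informations are in bits. -/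
noncomputable def privacyFunnel {σ α : Type*} [Fintype σ] [Fintype α]
    (pX : α → ℝ) (c : α → σ → ℝ) (t : ℝ) : ℝ :=
  sInf { r : ℝ | ∃ k : ℕ, ∃ W : α → Fin k → ℝ,
    (∀ x y, 0 ≤ W x y) ∧ (∀ x, ∑ y, W x y = 1) ∧
    (∑ x, ∑ y, pX x * W x y *
        Real.logb 2 ((pX x * W x y) / (pX x * ∑ x', pX x' * W x' y))) ≥ t ∧
    r = ∑ s, ∑ y, (∑ x, pX x * c x s * W x y) *
        Real.logb 2 ((∑ x, pX x * c x s * W x y) /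
          ((∑ x, pX x * c x s) * ∑ x', pX x' * W x' y)) }

/-! ### Auxiliary lemmas -/

/-- Gibbs-type pointwise lower bound: `a·log₂(a/b) ≥ (a-b)/ln 2`. -/
lemma PF_term_lb {a b : ℝ} (ha : 0 ≤ a) (hb : 0 ≤ b) (hab : b = 0 → a = 0) :
    (a - b) / Real.log 2 ≤ a * Real.logb 2 (a / b) := by
  rcases eq_or_lt_of_le ha with h | h
  · simp only [← h, zero_mul]
    apply div_nonpos_of_nonpos_of_nonneg (by linarith) (Real.log_nonneg (by norm_num))
  · have hb' : 0 < b := hb.lt_of_ne fun h0 => by have := hab h0.symm; linarith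
    have hlog : Real.log (b / a) ≤ b / a - 1 := Real.log_le_sub_one_of_pos (by positivity)
    have h2 : a - b ≤ a * Real.log (a / b) := by
      have := mul_le_mul_of_nonneg_left hlog (le_of_lt h)
      rw [Real.log_div (ne_of_gt hb') (ne_of_gt h)] at this
      rw [Real.log_div (ne_of_gt h) (ne_of_gt hb')]
      have ha' : a * (b / a) = b := by field_simp
      nlinarith
    rw [Real.logb, div_le_iff₀ (Real.log_pos (by norm_num))]
    calc a - b ≤ a * Real.log (a / b) := h2
      _ = a * (Real.log (a / b) / Real.log 2) * Real.log 2 := by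
          field_simp

lemma PF_cancel_ratio (l A B C : ℝ) (hl : l ≠ 0) :
    (A * (l * B)) / (A * (l * C)) = (A * B) / (A * C) := by
  rw [mul_left_comm A l B, mul_left_comm A l C, mul_div_mul_left _ _ hl]

lemma PF_cancel_ratio2 (l A P Q : ℝ) (hl : l ≠ 0) :
    (l * A) / (P * (l * Q)) = A / (P * Q) := by
  rw [mul_left_comm P l Q, mul_div_mul_left _ _ hl]

lemma PF_snoc_sum_eq {k : ℕ} (f : Fin (k + 1) → ℝ) (g : Fin k → ℝ) (L : ℝ)
    (hc : ∀ i, f (Fin.castSucc i) = L * g i) (hl : f (Fin.last k) = 0) :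
    ∑ y, f y = L * ∑ i, g i := by
  rw [Fin.sum_univ_castSucc, hl, add_zero, Finset.mul_sum]
  exact Finset.sum_congr rfl fun i _ => hc i

/-- A self-ratio contributes zero (covers both the `a = 0` and `a ≠ 0` cases). -/
lemma PF_self_ratio_term (a : ℝ) : a * Real.logb 2 (a / a) = 0 := by
  rcases eq_or_ne a 0 with h | h
  · rw [h, zero_mul]
  · rw [div_self h, Real.logb_one, mul_zero]

/-- The feasible set of values `I(S;Y)` appearing in the privacy funnel. -/
def PFset {σ α : Type*} [Fintype σ] [Fintype α]
    (pX : α → ℝ) (c : α → σ → ℝ) (t : ℝ) : Set ℝ :=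
  { r : ℝ | ∃ k : ℕ, ∃ W : α → Fin k → ℝ,
    (∀ x y, 0 ≤ W x y) ∧ (∀ x, ∑ y, W x y = 1) ∧
    (∑ x, ∑ y, pX x * W x y *
        Real.logb 2 ((pX x * W x y) / (pX x * ∑ x', pX x' * W x' y))) ≥ t ∧
    r = ∑ s, ∑ y, (∑ x, pX x * c x s * W x y) *
        Real.logb 2 ((∑ x, pX x * c x s * W x y) /
          ((∑ x, pX x * c x s) * ∑ x', pX x' * W x' y)) }

/-- Every feasible value `I(S;Y)` is nonnegative (Gibbs' inequality). -/
lemma PF_value_nonneg {σ α : Type*} [Fintype σ] [Fintype α]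
    (pX : α → ℝ) (hpX : ∀ x, 0 < pX x) (hpX1 : ∑ x, pX x = 1)
    (c : α → σ → ℝ) (hc0 : ∀ x s, 0 ≤ c x s) (hc1 : ∀ x, ∑ s, c x s = 1)
    {k : ℕ} (W : α → Fin k → ℝ) (hW0 : ∀ x y, 0 ≤ W x y) (hW1 : ∀ x, ∑ y, W x y = 1) :
    0 ≤ ∑ s, ∑ y, (∑ x, pX x * c x s * W x y) *
        Real.logb 2 ((∑ x, pX x * c x s * W x y) /
          ((∑ x, pX x * c x s) * ∑ x', pX x' * W x' y)) := by
  set A : σ → Fin k → ℝ := fun s y => ∑ x, pX x * c x s * W x y with hAdef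
  set B : σ → Fin k → ℝ := fun s y => (∑ x, pX x * c x s) * ∑ x', pX x' * W x' y with hBdef
  have hA : ∑ s, ∑ y, A s y = 1 := by
    have h1 : ∀ s : σ, ∑ y, A s y = ∑ x, ∑ y, pX x * c x s * W x y := fun s => by
      rw [Finset.sum_comm]
    simp only [h1]
    rw [Finset.sum_comm]
    simp only [← Finset.mul_sum, hW1, mul_one]
    simp only [show ∀ x, ∑ s, pX x * c x s = pX x * ∑ s, c x s from
      fun x => (Finset.mul_sum _ _ _).symm, hc1, mul_one, hpX1]
  have hB : ∑ s, ∑ y, B s y = 1 := by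
    have h1 : (∑ s, ∑ x, pX x * c x s) = 1 := by
      rw [Finset.sum_comm]
      simp only [show ∀ x, ∑ s, pX x * c x s = pX x * ∑ s, c x s from
        fun x => (Finset.mul_sum _ _ _).symm, hc1, mul_one, hpX1]
    have h2 : (∑ y : Fin k, ∑ x', pX x' * W x' y) = 1 := by
      rw [Finset.sum_comm]
      simp only [← Finset.mul_sum, hW1, mul_one, hpX1]
    calc ∑ s, ∑ y, B s y = (∑ s, ∑ x, pX x * c x s) * (∑ y : Fin k, ∑ x', pX x' * W x' y) := by
          rw [Finset.sum_mul_sum]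
      _ = 1 := by rw [h1, h2, one_mul]
  have key : ∀ s y, (A s y - B s y) / Real.log 2 ≤ A s y * Real.logb 2 (A s y / B s y) := by
    intro s y
    apply PF_term_lb
    · exact Finset.sum_nonneg fun x _ => by
        have := (hpX x).le; have := hc0 x s; have := hW0 x y; positivity
    · exact mul_nonneg (Finset.sum_nonneg fun x _ => mul_nonneg (hpX x).le (hc0 x s))
        (Finset.sum_nonneg fun x _ => mul_nonneg (hpX x).le (hW0 x y))
    · intro hb0
      rcases mul_eq_zero.1 hb0 with h | h
      · have hz : ∀ x ∈ Finset.univ, pX x * c x s = 0 :=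
          (Finset.sum_eq_zero_iff_of_nonneg fun x _ =>
            mul_nonneg (hpX x).le (hc0 x s)).1 h
        exact Finset.sum_eq_zero fun x _ => by
          rw [hz x (Finset.mem_univ x), zero_mul]
      · have hz : ∀ x ∈ Finset.univ, pX x * W x y = 0 :=
          (Finset.sum_eq_zero_iff_of_nonneg fun x _ =>
            mul_nonneg (hpX x).le (hW0 x y)).1 h
        exact Finset.sum_eq_zero fun x _ => by
          have h2 := hz x (Finset.mem_univ x)
          rcases mul_eq_zero.1 h2 with h' | h'
          · exact absurd h' (ne_of_gt (hpX x))
          · rw [h', mul_zero]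
  calc (0 : ℝ) = (∑ s, ∑ y, (A s y - B s y)) / Real.log 2 := by
        simp [Finset.sum_sub_distrib, hA, hB]
    _ = ∑ s, ∑ y, (A s y - B s y) / Real.log 2 := by
        rw [Finset.sum_div]
        exact Finset.sum_congr rfl fun s _ => by rw [Finset.sum_div]
    _ ≤ ∑ s, ∑ y, A s y * Real.logb 2 (A s y / B s y) :=
        Finset.sum_le_sum fun s _ => Finset.sum_le_sum fun y _ => key s y

/-- The erasure construction: if `r` is feasible at level `t`, then `λ·r`
is feasible at level `λ·t`. -/
lemma PF_erased_mem {σ α : Type*} [Fintype σ] [Fintype α]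
    (pX : α → ℝ) (hpX1 : ∑ x, pX x = 1) (c : α → σ → ℝ)
    {lam : ℝ} (hlam0 : 0 < lam) (hlam1 : lam ≤ 1) {t r : ℝ}
    (h : r ∈ PFset pX c t) : lam * r ∈ PFset pX c (lam * t) := by
  obtain ⟨k, W, hW0, hW1, hcon, hr⟩ := h
  have hl : lam ≠ 0 := ne_of_gt hlam0
  set W' : α → Fin (k + 1) → ℝ :=
    fun x => Fin.snoc (fun y => lam * W x y) (1 - lam) with hW'def
  have hW'c : ∀ x (i : Fin k), W' x (Fin.castSucc i) = lam * W x i := by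
    intro x i; simp [hW'def]
  have hW'l : ∀ x, W' x (Fin.last k) = 1 - lam := by
    intro x; simp [hW'def]
  have hqc : ∀ i : Fin k, (∑ x', pX x' * W' x' (Fin.castSucc i))
      = lam * ∑ x', pX x' * W x' i := by
    intro i
    rw [Finset.mul_sum]
    exact Finset.sum_congr rfl fun x _ => by rw [hW'c]; ring
  have hql : (∑ x', pX x' * W' x' (Fin.last k)) = 1 - lam := by
    simp only [hW'l, ← Finset.sum_mul, hpX1, one_mul]
  refine ⟨k + 1, W', ?_, ?_, ?_, ?_⟩
  · intro x y
    refine Fin.lastCases ?_ ?_ y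
    · rw [hW'l]; linarith
    · intro i; rw [hW'c]; exact mul_nonneg hlam0.le (hW0 x i)
  · intro x
    rw [Fin.sum_univ_castSucc]
    simp only [hW'c, hW'l, ← Finset.mul_sum, hW1, mul_one]
    ring
  · have hcomp : (∑ x, ∑ y, pX x * W' x y *
        Real.logb 2 ((pX x * W' x y) / (pX x * ∑ x', pX x' * W' x' y)))
        = lam * ∑ x, ∑ y, pX x * W x y *
        Real.logb 2 ((pX x * W x y) / (pX x * ∑ x', pX x' * W x' y)) := by
      rw [Finset.mul_sum]
      refine Finset.sum_congr rfl fun x _ => ?_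
      refine PF_snoc_sum_eq _ _ _ (fun i => ?_) ?_
      · rw [hW'c, hqc, PF_cancel_ratio lam (pX x) (W x i) _ hl]
        ring
      · rw [hW'l, hql, PF_self_ratio_term]
    rw [hcomp]
    exact mul_le_mul_of_nonneg_left hcon hlam0.le
  · have hAc : ∀ (s : σ) (i : Fin k),
        (∑ x, pX x * c x s * W' x (Fin.castSucc i))
          = lam * ∑ x, pX x * c x s * W x i := by
      intro s i
      rw [Finset.mul_sum]
      exact Finset.sum_congr rfl fun x _ => by rw [hW'c]; ring
    have hAl : ∀ s : σ, (∑ x, pX x * c x s * W' x (Fin.last k))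
        = (∑ x, pX x * c x s) * (1 - lam) := by
      intro s
      rw [Finset.sum_mul]
      exact Finset.sum_congr rfl fun x _ => by rw [hW'l]
    rw [hr, Finset.mul_sum]
    refine Finset.sum_congr rfl fun s _ => ?_
    refine Eq.symm (PF_snoc_sum_eq _ _ _ (fun i => ?_) ?_)
    · rw [hAc, hqc, PF_cancel_ratio2 lam _ _ _ hl]
      ring
    · rw [hAl, hql, mul_comm (∑ x, pX x * c x s) (1 - lam), PF_self_ratio_term]

/-- The identity channel `Y = X` shows feasibility for every `t ≤ H(X)`. -/
lemma PF_nonempty {σ α : Type*} [Fintype σ] [Fintype α]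
    (pX : α → ℝ) (hpX : ∀ x, 0 < pX x) (c : α → σ → ℝ)
    {t : ℝ} (htH : t ≤ -∑ x, pX x * Real.logb 2 (pX x)) :
    (PFset pX c t).Nonempty := by
  classical
  set e := Fintype.equivFin α with he
  set W : α → Fin (Fintype.card α) → ℝ := fun x y => if e x = y then 1 else 0 with hWdef
  have hq : ∀ y, (∑ x', pX x' * W x' y) = pX (e.symm y) := by
    intro y
    rw [Finset.sum_eq_single (e.symm y)]
    · simp [hWdef]
    · intro x _ hx
      have hxy : e x ≠ y := fun h => hx (by rw [← h, Equiv.symm_apply_apply])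
      simp [hWdef, hxy]
    · simp
  have hcon : (∑ x, ∑ y, pX x * W x y *
      Real.logb 2 ((pX x * W x y) / (pX x * ∑ x', pX x' * W x' y)))
      = -∑ x, pX x * Real.logb 2 (pX x) := by
    rw [← Finset.sum_neg_distrib]
    refine Finset.sum_congr rfl fun x _ => ?_
    rw [Finset.sum_eq_single (e x)]
    · have h1 : W x (e x) = 1 := by simp [hWdef]
      rw [h1, hq, Equiv.symm_apply_apply, mul_one]
      have hx := hpX x
      have h2 : pX x / (pX x * pX x) = (pX x)⁻¹ := by field_simp
      rw [h2, Real.logb_inv]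
      ring
    · intro y _ hy
      have hxy : e x ≠ y := fun h => hy h.symm
      simp [hWdef, hxy]
    · simp
  refine ⟨_, ⟨Fintype.card α, W, fun x y => ?_, fun x => ?_, ?_, rfl⟩⟩
  · by_cases h : e x = y <;> simp [hWdef, h]
  · simp [hWdef]
  · rw [hcon]; exact htH

/-- `t ↦ G_I(t)/t` is non-decreasing on `(0, H(X)]`:
`G_I(λt)/(λt) ≤ G_I(t)/t` for `0 < λ ≤ 1` and `0 < t ≤ H(X)`. -/
theorem privacyFunnel_ratio_mono {σ α : Type*} [Fintype σ] [Fintype α]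
    (pX : α → ℝ) (hpX : ∀ x, 0 < pX x) (hpX1 : ∑ x, pX x = 1)
    (c : α → σ → ℝ) (hc0 : ∀ x s, 0 ≤ c x s) (hc1 : ∀ x, ∑ s, c x s = 1)
    (hISX : 0 < ∑ x, ∑ s, pX x * c x s *
        Real.logb 2 ((pX x * c x s) / (pX x * ∑ x', pX x' * c x' s)))
    (lam t : ℝ) (hlam0 : 0 < lam) (hlam1 : lam ≤ 1)
    (ht0 : 0 < t) (htH : t ≤ -∑ x, pX x * Real.logb 2 (pX x)) :
    privacyFunnel pX c (lam * t) / (lam * t) ≤ privacyFunnel pX c t / t := by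
  have hne : (PFset pX c t).Nonempty := PF_nonempty pX hpX c htH
  have hlb : ∀ u : ℝ, ∀ r ∈ PFset pX c u, (0 : ℝ) ≤ r := by
    rintro u r ⟨k, W, h0, h1, -, hr⟩
    rw [hr]
    exact PF_value_nonneg pX hpX hpX1 c hc0 hc1 W h0 h1
  have hbdd : BddBelow (PFset pX c (lam * t)) := ⟨0, fun r hr => hlb _ r hr⟩
  have hPF : ∀ u : ℝ, privacyFunnel pX c u = sInf (PFset pX c u) := fun _ => rfl
  have h1 : sInf (PFset pX c (lam * t)) ≤ lam * sInf (PFset pX c t) := by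
    have hdiv : sInf (PFset pX c (lam * t)) / lam ≤ sInf (PFset pX c t) := by
      refine le_csInf hne fun r hr => ?_
      have hle : sInf (PFset pX c (lam * t)) ≤ lam * r :=
        csInf_le hbdd (PF_erased_mem pX hpX1 c hlam0 hlam1 hr)
      rw [div_le_iff₀ hlam0]
      linarith
    have := mul_le_mul_of_nonneg_right hdiv hlam0.le
    rw [div_mul_cancel₀ _ (ne_of_gt hlam0)] at this
    linarith
  rw [hPF, hPF]
  have hlt : 0 < lam * t := mul_pos hlam0 ht0
  calc sInf (PFset pX c (lam * t)) / (lam * t)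
      ≤ (lam * sInf (PFset pX c t)) / (lam * t) := by gcongr
    _ = sInf (PFset pX c t) / t := mul_div_mul_left _ _ (ne_of_gt hlam0)
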